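/- Let A be a division ring such that the polynomial ring A[x] is right quasi-invariant (every maximal right ideal of A[x] is a two-sided ideal). Then A is commutative, i.e., A is a field. -/
import Mathlib

section Aux
open Polynomial
variable {A : Type*} [DivisionRing A]

lemma div_aux (a : A) : ∀ (n : ℕ) (f : A[X]), f.natDegree ≤ n →
    ∃ q r, f = (X - C a) * q + C r := by
  intro n
  induction n with
  | zero =>
    intro f hf
    refine ⟨0, f.coeff 0, ?_⟩
    conv_lhs => rw [Polynomial.eq_C_of_natDegree_le_zero hf]
    simp
  | succ n ih =>
    intro f hf
    obtain ⟨q, r, hq⟩ := ih f.divX (by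
      rw [Polynomial.natDegree_divX_eq_natDegree_tsub_one]; omega)
    refine ⟨X * q + C r, a * r + f.coeff 0, ?_⟩
    conv_lhs => rw [← f.X_mul_divX_add, hq]
    simp only [mul_add, add_mul, sub_mul, mul_sub, mul_assoc, Polynomial.C_add,
      Polynomial.C_mul, Polynomial.X_mul]
    abel

lemma mem_span_singleton_op (g v : A[X]) :
    v ∈ Submodule.span (A[X])ᵐᵒᵖ {g} ↔ ∃ q, g * q = v := by
  rw [Submodule.mem_span_singleton]
  constructor
  · rintro ⟨q, rfl⟩
    exact ⟨q.unop, rfl⟩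
  · rintro ⟨q, rfl⟩
    exact ⟨MulOpposite.op q, rfl⟩

lemma deg_lemma (a : A) (q : A[X]) (r : A) (hq : C r = (X - C a) * q) : q = 0 ∧ r = 0 := by
  have hm : (X - C a).Monic := monic_X_sub_C a
  by_cases hq0 : q = 0
  · subst hq0
    simp only [mul_zero] at hq
    exact ⟨rfl, by simpa using congrArg (fun p => p.coeff 0) hq⟩
  · exfalso
    have := hm.natDegree_mul' hq0
    rw [← hq] at this
    simp [natDegree_X_sub_C] at this
    omega

lemma coatom_span (a : A) : IsCoatom (Submodule.span (A[X])ᵐᵒᵖ {X - C a}) := by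
  set M := Submodule.span (A[X])ᵐᵒᵖ {X - C a} with hM
  constructor
  · intro htop
    have h1 : (1 : A[X]) ∈ M := htop ▸ Submodule.mem_top
    rw [hM, mem_span_singleton_op] at h1
    obtain ⟨q, hq⟩ := h1
    obtain ⟨_, h0⟩ := deg_lemma a q 1 (by simpa using hq.symm)
    exact one_ne_zero h0
  · intro N hN
    obtain ⟨f, hfN, hfM⟩ := SetLike.exists_of_lt hN
    obtain ⟨q, r, hfr⟩ := div_aux a f.natDegree f le_rfl
    have hr : r ≠ 0 := by
      rintro rfl
      apply hfM
      rw [hM, mem_span_singleton_op]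
      exact ⟨q, by simpa using hfr.symm⟩
    have hmem : (X - C a) * q ∈ N := hN.le (by rw [hM, mem_span_singleton_op]; exact ⟨q, rfl⟩)
    have hCr : C r ∈ N := by
      have : C r = f - (X - C a) * q := by rw [hfr]; abel
      rw [this]
      exact Submodule.sub_mem N hfN hmem
    have hone : (1 : A[X]) ∈ N := by
      have := Submodule.smul_mem N (MulOpposite.op (C r⁻¹)) hCr
      simpa [MulOpposite.smul_eq_mul_unop, ← Polynomial.C_mul, mul_inv_cancel₀ hr] using this
    rw [Submodule.eq_top_iff']
    intro g
    have := Submodule.smul_mem N (MulOpposite.op g) hone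
    simpa [MulOpposite.smul_eq_mul_unop] using this

end Aux


/-- A ring is *centrally essential* if its center is an essential submodule over the
center, i.e. every nonzero element has a nonzero central multiple by a central element. -/
def IsCentrallyEssential (A : Type*) [Ring A] : Prop :=
  ∀ a : A, a ≠ 0 → ∃ z ∈ Set.center A, a * z ≠ 0 ∧ a * z ∈ Set.center A

/-- A right ideal (submodule of `A` as a right module over itself) is a two-sided ideal
if it is closed under left multiplication. -/
def IsTwoSidedRightIdeal {A : Type*} [Ring A] (I : Submodule Aᵐᵒᵖ A) : Prop :=
  ∀ a x : A, x ∈ I → a * x ∈ I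

/-- A ring is right quasi-invariant if every maximal right ideal is two-sided. -/
def IsRightQuasiInvariant (A : Type*) [Ring A] : Prop :=
  ∀ M : Submodule Aᵐᵒᵖ A, IsCoatom M → IsTwoSidedRightIdeal M

/-- If `A` is a division ring and `A[x]` is right quasi-invariant, then `A` is
commutative (i.e. `A` is a field). -/
theorem stmt_6 (A : Type*) [DivisionRing A]
    (h : IsRightQuasiInvariant (Polynomial A)) :
    ∀ a b : A, a * b = b * a := by
  intro a b
  open Polynomial in
  have hco := coatom_span a
  have hmem : C b * (X - C a) ∈ Submodule.span (A[X])ᵐᵒᵖ {X - C a} :=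
    h _ hco (C b) (X - C a) (Submodule.mem_span_singleton_self _)
  rw [mem_span_singleton_op] at hmem
  obtain ⟨q, hq⟩ := hmem
  have hdeg : q.natDegree = 0 := by
    by_cases hq0 : q = 0
    · simp [hq0]
    have h1 : ((X - C a) * q).natDegree = 1 + q.natDegree := by
      rw [(monic_X_sub_C a).natDegree_mul' hq0, natDegree_X_sub_C]
    have h2 : (C b * (X - C a)).natDegree ≤ 1 := by
      refine (natDegree_mul_le).trans ?_
      simp [natDegree_X_sub_C]
    rw [hq] at h1
    omega
  obtain ⟨c, rfl⟩ := Polynomial.natDegree_eq_zero.mp hdeg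
  have h1 := congrArg (fun p => p.coeff 1) hq
  have h0 := congrArg (fun p => p.coeff 0) hq
  simp only [sub_mul, mul_sub, coeff_sub, coeff_mul_C, coeff_C_mul, coeff_X_zero,
    coeff_X_one, coeff_C, one_mul, zero_mul, mul_zero, zero_sub, mul_one] at h1 h0
  simp at h1 h0
  subst h1; exact h0
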